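/- Let φ be a substitution of constant length k ≥ 2 and let x be a biinfinite sequence fixed by φ. Then the k-kernel of x is contained in the set {Ψ_i(x) : i a word over {0,…,k-1}}, which is finite; in particular every fixed point of a constant-length-k substitution is k-automatic. -/

import Mathlib

/-- The extension of a substitution `φ : A → A*` to finite words, by concatenation. -/
def substWord {A : Type*} (φ : A → List A) (w : List A) : List A := w.flatMap φ

/-- The extension of a substitution of constant length `k` to biinfinite sequences:
position `0` of the image is the start of `φ(x 0)`. -/
def substZ {A : Type*} [Inhabited A] (φ : A → List A) (k : ℕ) (x : ℤ → A) : ℤ → A :=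
  fun n => (φ (x (Int.fdiv n (k : ℤ)))).getD (Int.fmod n (k : ℤ)).toNat default

/-- The shift `T^c` on biinfinite sequences (`T` is the left shift). -/
def shiftZ {A : Type*} (c : ℤ) (x : ℤ → A) : ℤ → A := fun n => x (n + c)

/-- The composition `Ψ_{i_{m-1}} ∘ ⋯ ∘ Ψ_{i_0}` of the column maps of a substitution of
constant length `k`, where `Ψ_i` sends a letter `a` to the `i`-th letter of `φ(a)`. -/
def psiWord {A : Type*} [Inhabited A] (φ : A → List A) {m k : ℕ} (i : Fin m → Fin k) : A → A :=
  fun a => (List.ofFn i).foldl (fun b j => (φ b).getD (j : ℕ) default) a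

/-- The `k`-kernel of a biinfinite sequence `x`: the set of subsequences
`n ↦ x (k^m * n + j)` for `m ≥ 0` and `0 ≤ j < k^m`. -/
def kernelK {A : Type*} (k : ℕ) (x : ℤ → A) : Set (ℤ → A) :=
  {y | ∃ (m j : ℕ), j < k ^ m ∧ y = fun n => x ((k : ℤ) ^ m * n + (j : ℤ))}

/-- `psiWord` on a snoc: apply the last column map after the rest. -/
lemma psiWord_snoc {A : Type*} [Inhabited A] (φ : A → List A) {m k : ℕ}
    (i : Fin m → Fin k) (r : Fin k) (a : A) :
    psiWord φ (Fin.snoc i r) a = (φ (psiWord φ i a)).getD (r : ℕ) default := by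
  unfold psiWord
  rw [List.ofFn_succ']
  simp [List.concat_eq_append]

/-- Let `φ` be a substitution of constant length `k ≥ 2` on a finite alphabet and `x` a
biinfinite fixed point of `φ`. Then the `k`-kernel of `x` is contained in the set
`{Ψ_i(x) : i a word over {0,…,k-1}}`, which is finite; in particular the `k`-kernel of `x`
is finite, i.e. `x` is `k`-automatic. -/
theorem kernel_of_fixed_point_subset_psi {A : Type*} [Inhabited A] [Fintype A]
    (φ : A → List A) (k : ℕ) (hk : 2 ≤ k) (hlen : ∀ a, (φ a).length = k)
    (x : ℤ → A) (hfix : substZ φ k x = x) :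
    kernelK k x ⊆ {y : ℤ → A | ∃ (m : ℕ) (i : Fin m → Fin k), y = fun n => psiWord φ i (x n)} ∧
    Set.Finite {y : ℤ → A | ∃ (m : ℕ) (i : Fin m → Fin k), y = fun n => psiWord φ i (x n)} ∧
    (kernelK k x).Finite := by
  have hk0 : (0:ℤ) < (k:ℤ) := by exact_mod_cast Nat.lt_of_lt_of_le Nat.zero_lt_two hk
  -- One-step recursion from the fixed-point equation.
  have hkey : ∀ (q : ℤ) (r : ℕ), r < k → x ((k:ℤ) * q + (r:ℤ)) = (φ (x q)).getD r default := by
    intro q r hr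
    conv_lhs => rw [← hfix]
    unfold substZ
    have hdiv : Int.fdiv ((k:ℤ) * q + (r:ℤ)) (k:ℤ) = q := by
      rw [Int.fdiv_eq_ediv_of_nonneg _ hk0.le, add_comm, Int.add_mul_ediv_left _ _ hk0.ne',
        Int.ediv_eq_zero_of_lt (by positivity) (by exact_mod_cast hr), zero_add]
    have hmod : Int.fmod ((k:ℤ) * q + (r:ℤ)) (k:ℤ) = (r:ℤ) := by
      rw [Int.fmod_eq_emod_of_nonneg _ hk0.le, add_comm, Int.add_mul_emod_self_left,
        Int.emod_eq_of_lt (by positivity) (by exact_mod_cast hr)]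
    rw [hdiv, hmod, Int.toNat_natCast]
  -- Main claim: each kernel element is a `Ψ_i(x)`.
  have hmain : ∀ (m j : ℕ), j < k ^ m → ∃ i : Fin m → Fin k,
      (fun n => x ((k:ℤ) ^ m * n + (j:ℤ))) = fun n => psiWord φ i (x n) := by
    intro m
    induction m with
    | zero =>
      intro j hj
      have hj0 : j = 0 := Nat.lt_one_iff.mp (by simpa using hj)
      subst hj0
      refine ⟨Fin.elim0, ?_⟩
      funext n
      simp [psiWord]
    | succ m ih =>
      intro j hj
      have hjk : j / k < k ^ m := Nat.div_lt_of_lt_mul (by rw [mul_comm, ← pow_succ]; exact hj)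
      obtain ⟨i, hi⟩ := ih (j / k) hjk
      refine ⟨Fin.snoc i ⟨j % k, Nat.mod_lt _ (by omega)⟩, ?_⟩
      funext n
      have harith : (k:ℤ) ^ (m+1) * n + (j:ℤ)
          = (k:ℤ) * ((k:ℤ) ^ m * n + ((j / k : ℕ) : ℤ)) + ((j % k : ℕ) : ℤ) := by
        have h1 : (j:ℤ) = (k:ℤ) * ((j / k : ℕ) : ℤ) + ((j % k : ℕ) : ℤ) := by
          exact_mod_cast (Nat.div_add_mod j k).symm
        rw [h1]; ring
      rw [harith, hkey _ _ (Nat.mod_lt _ (by omega)), psiWord_snoc]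
      rw [congrFun hi n]
  refine ⟨?_, ?_, ?_⟩
  · rintro y ⟨m, j, hj, rfl⟩
    obtain ⟨i, hi⟩ := hmain m j hj
    exact ⟨m, i, hi⟩
  · have : {y : ℤ → A | ∃ (m : ℕ) (i : Fin m → Fin k), y = fun n => psiWord φ i (x n)}
        ⊆ (fun g : A → A => fun n => g (x n)) '' Set.univ := by
      rintro y ⟨m, i, rfl⟩
      exact ⟨psiWord φ i, Set.mem_univ _, rfl⟩
    exact Set.Finite.subset ((Set.finite_univ (α := A → A)).image _) this
  · refine Set.Finite.subset
      ((Set.finite_univ (α := A → A)).image (fun g : A → A => fun n => g (x n)))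
      (fun y hy => ?_)
    obtain ⟨m, j, hj, rfl⟩ := hy
    obtain ⟨i, hi⟩ := hmain m j hj
    exact ⟨psiWord φ i, Set.mem_univ _, hi.symm⟩
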